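/- Let B=(b_{ij})_{i,j∈I} be a skew-symmetrizable integer matrix over a finite index set I, with diagonal matrix D=diag(d_i) (d_i positive integers) such that DB is skew-symmetric. Let c∈ℚ, let P=(p_{ij}) be a skew-symmetric rational matrix with PB=cD, fix k∈I, let B'=μ_k(B) and let P' be obtained from P by the Poisson-matrix exchange relation at k. Then P' is skew-symmetric and P'B'=cD. -/

import Mathlib

open Matrix

/-- Matrix mutation `μ_k(B)` at index `k`:
`b'_{ij} = -b_{ij}` if `i = k` or `j = k`, and
`b'_{ij} = b_{ij} + (|b_{ik}| b_{kj} + b_{ik} |b_{kj}|)/2` otherwise. -/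
def matMut {I : Type*} [DecidableEq I] (B : Matrix I I ℚ) (k : I) : Matrix I I ℚ :=
  Matrix.of fun i j =>
    if i = k ∨ j = k then -B i j
    else B i j + (|B i k| * B k j + B i k * |B k j|) / 2

/-- The Poisson-matrix exchange relation at index `k`:
`p'_{ij} = -p_{ik} + Σ_{l : b_{lk} > 0} b_{lk} p_{il}` if `i ≠ j = k`;
`p'_{ij} = -p_{kj} + Σ_{l : b_{lk} > 0} b_{lk} p_{lj}` if `i = k ≠ j`;
`p'_{ij} = p_{ij}` otherwise. -/
def poissonMut {I : Type*} [Fintype I] [DecidableEq I] (B P : Matrix I I ℚ) (k : I) :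
    Matrix I I ℚ :=
  Matrix.of fun i j =>
    if i ≠ k ∧ j = k then -P i k + ∑ l, (if 0 < B l k then B l k * P i l else 0)
    else if i = k ∧ j ≠ k then -P k j + ∑ l, (if 0 < B l k then B l k * P l j else 0)
    else P i j


lemma aux_qid (x y : ℚ) :
    (if 0 < x then x else 0) * y + x * (if 0 < -y then -y else 0)
      = (|x| * y + x * |y|) / 2 := by
  rcases le_or_gt x 0 with hx | hx <;> rcases le_or_gt y 0 with hy | hy
  · rw [if_neg (not_lt.2 hx), abs_of_nonpos hx, abs_of_nonpos hy]
    rcases eq_or_lt_of_le hy with rfl | hy'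
    · simp
    · rw [if_pos (by linarith)]; ring
  · rw [if_neg (not_lt.2 hx), if_neg (by simpa using hy.le), abs_of_nonpos hx,
      abs_of_pos hy]; ring
  · rw [if_pos hx, abs_of_pos hx, abs_of_nonpos hy]
    rcases eq_or_lt_of_le hy with rfl | hy'
    · simp
    · rw [if_pos (by linarith)]; ring
  · rw [if_pos hx, if_neg (by simpa using hy.le), abs_of_pos hx, abs_of_pos hy]; ring

section
set_option linter.unusedSectionVars false
variable {I : Type*} [Fintype I] [DecidableEq I]

lemma antisym_sum (f : I → I → ℚ) (h : ∀ l m, f l m = -f m l) :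
    ∑ l, ∑ m, f l m = 0 := by
  have h1 : ∑ l, ∑ m, f l m = ∑ l, ∑ m, f m l := Finset.sum_comm
  have h2 : ∑ l : I, ∑ m : I, f m l = -∑ l : I, ∑ m : I, f l m := by
    rw [← Finset.sum_neg_distrib]
    refine Finset.sum_congr rfl fun l _ => ?_
    rw [← Finset.sum_neg_distrib]
    exact Finset.sum_congr rfl fun m _ => h m l
  linarith

def eta (Q : Matrix I I ℚ) (k l : I) : ℚ := if 0 < Q l k then Q l k else 0
def zeta (Q : Matrix I I ℚ) (k j : I) : ℚ := if 0 < -Q k j then -Q k j else 0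

def Ealt (Q : Matrix I I ℚ) (k : I) : Matrix I I ℚ :=
  Matrix.of fun l m =>
    if m = k then eta Q k l - (if l = k then 1 else 0)
    else if l = m then 1 else 0

def Falt (Q : Matrix I I ℚ) (k : I) : Matrix I I ℚ :=
  Matrix.of fun l m =>
    if l = k then zeta Q k m - (if m = k then 1 else 0)
    else if l = m then 1 else 0

variable (Q : Matrix I I ℚ) (k : I)

lemma mulE (X : Matrix I I ℚ) (i j : I) :
    (X * Ealt Q k) i j = if j = k then (∑ l, eta Q k l * X i l) - X i k else X i j := by
  simp only [mul_apply, Ealt, of_apply]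
  by_cases hj : j = k
  · simp [hj, mul_sub, Finset.sum_sub_distrib, mul_ite, mul_zero, mul_one,
      Finset.sum_ite_eq', mul_comm]
  · simp [hj, Finset.sum_ite_eq', mul_ite, mul_zero, mul_one]

lemma EmulT (X : Matrix I I ℚ) (i j : I) :
    ((Ealt Q k)ᵀ * X) i j = if i = k then (∑ l, eta Q k l * X l j) - X k j else X i j := by
  simp only [mul_apply, transpose_apply, Ealt, of_apply]
  by_cases hi : i = k
  · simp [hi, sub_mul, Finset.sum_sub_distrib, ite_mul, zero_mul, one_mul,
      Finset.sum_ite_eq']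
  · simp [hi, Finset.sum_ite_eq', ite_mul, zero_mul, one_mul]

lemma Emul (X : Matrix I I ℚ) (i j : I) :
    (Ealt Q k * X) i j =
      if i = k then (eta Q k k - 1) * X k j else X i j + eta Q k i * X k j := by
  simp only [mul_apply, Ealt, of_apply]
  have key : ∀ l : I,
      (if l = k then eta Q k i - (if i = k then 1 else 0) else if i = l then 1 else 0) * X l j
      = (if i = l then X l j else 0)
        + (if l = k then (eta Q k i - 2 * (if i = k then 1 else 0)) * X k j else 0) := by
    intro l
    by_cases hl : l = k <;> by_cases hil : i = l <;> by_cases hik : i = k <;> simp_all <;> ring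
  rw [Finset.sum_congr rfl (fun l _ => key l), Finset.sum_add_distrib,
    Finset.sum_ite_eq, Finset.sum_ite_eq']
  by_cases hi : i = k <;> simp [hi] <;> ring

lemma mulF (X : Matrix I I ℚ) (i j : I) :
    (X * Falt Q k) i j =
      if j = k then X i k * (zeta Q k k - 1) else X i j + X i k * zeta Q k j := by
  simp only [mul_apply, Falt, of_apply]
  have key : ∀ m : I,
      X i m * (if m = k then zeta Q k j - (if j = k then 1 else 0) else if m = j then 1 else 0)
      = (if m = j then X i m else 0)
        + (if m = k then X i k * (zeta Q k j - 2 * (if j = k then 1 else 0)) else 0) := by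
    intro m
    by_cases hm : m = k <;> by_cases hmj : m = j <;> by_cases hjk : j = k <;> simp_all <;> ring
  rw [Finset.sum_congr rfl (fun m _ => key m), Finset.sum_add_distrib,
    Finset.sum_ite_eq', Finset.sum_ite_eq']
  by_cases hj : j = k <;> simp [hj] <;> ring

lemma hEE (hk : Q k k = 0) : Ealt Q k * Ealt Q k = 1 := by
  have hek : eta Q k k = 0 := by simp [eta, hk]
  ext i j
  rw [Emul]
  by_cases hi : i = k <;> by_cases hj : j = k
  · subst hi; subst hj; simp [Ealt, hek, one_apply]
  · subst hi; simp [Ealt, hek, one_apply, hj, Ne.symm hj]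
  · subst hj; simp [Ealt, hek, one_apply, hi, Ne.symm hi]
  · simp [Ealt, hek, one_apply, hi, hj, Ne.symm hj]

lemma hBmut (hk : Q k k = 0) : matMut Q k = Ealt Q k * (Q * Falt Q k) := by
  have hek : eta Q k k = 0 := by simp [eta, hk]
  have hzk : zeta Q k k = 0 := by simp [zeta, hk]
  ext i j
  rw [Emul]
  simp only [mulF, matMut, of_apply]
  by_cases hi : i = k <;> by_cases hj : j = k
  · subst hi; subst hj
    simp only [if_pos rfl, if_pos (Or.inl rfl), hek, hzk, hk]; simp
  · subst hi
    simp only [if_pos rfl, if_pos (Or.inl rfl), if_neg hj, hek, hzk, hk]; simp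
  · subst hj
    simp only [if_neg hi, if_pos rfl, if_pos (Or.inr rfl), hek, hzk, hk]; simp
  · simp only [if_neg hi, if_neg hj, if_neg (show ¬(i = k ∨ j = k) by tauto), hk]
    rw [← aux_qid (Q i k) (Q k j)]
    simp only [eta, zeta]; ring

lemma hPmut (P : Matrix I I ℚ) (hP : Pᵀ = -P) (hk : Q k k = 0) :
    poissonMut Q P k = (Ealt Q k)ᵀ * (P * Ealt Q k) := by
  have hPa : ∀ a b, P b a = -P a b := fun a b => by
    have := congrFun (congrFun hP a) b; simpa using this
  have hPkk : P k k = 0 := by have := hPa k k; linarith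
  ext i j
  rw [EmulT]
  simp only [poissonMut, of_apply]
  by_cases hi : i = k <;> by_cases hj : j = k
  · rw [hi, hj]
    have h1 : ∀ l : I, (P * Ealt Q k) l k = (∑ m, eta Q k m * P l m) - P l k :=
      fun l => by rw [mulE, if_pos rfl]
    have hA : ∑ l : I, ∑ m : I, eta Q k l * (eta Q k m * P l m) = 0 := by
      refine antisym_sum _ fun l m => ?_
      rw [hPa m l]; ring
    have hB : ∑ l : I, eta Q k l * P l k = -∑ l : I, eta Q k l * P k l := by
      rw [← Finset.sum_neg_distrib]
      exact Finset.sum_congr rfl fun l _ => by rw [hPa k l]; ring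
    simp only [h1, ne_eq, not_true_eq_false, false_and, if_false, and_false, ite_true,
      eq_self_iff_true, if_true, mul_sub, Finset.sum_sub_distrib, Finset.mul_sum]
    rw [hA, hB]
    simp [hPkk]
  · -- i = k, j ≠ k
    rw [hi]
    have h1 : ∀ l : I, (P * Ealt Q k) l j = P l j := fun l => by rw [mulE, if_neg hj]
    simp only [h1, ne_eq, not_true_eq_false, false_and, if_false, hj,
      not_false_eq_true, and_true, and_self, ite_true, eq_self_iff_true, if_true,
      true_and]
    simp only [eta, ite_mul, zero_mul]
    ring
  · -- i ≠ k, j = k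
    rw [hj]
    have h1 : (P * Ealt Q k) i k = (∑ m, eta Q k m * P i m) - P i k := by
      rw [mulE, if_pos rfl]
    simp only [h1, ne_eq, hi, not_false_eq_true, true_and, eq_self_iff_true, if_true,
      if_neg hi, if_false]
    simp only [eta, ite_mul, zero_mul]
    ring
  · rw [if_neg hi, mulE, if_neg hj]
    simp [hi, hj]

lemma hD (d' : I → ℚ) (hd' : ∀ i, 0 < d' i)
    (hsk : ∀ i j, d' i * Q i j = -(d' j * Q j i)) (hk : Q k k = 0) :
    (Ealt Q k)ᵀ * (Matrix.diagonal d' * Falt Q k) = Matrix.diagonal d' := by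
  have hek : eta Q k k = 0 := by simp [eta, hk]
  have hzk : zeta Q k k = 0 := by simp [zeta, hk]
  have key : ∀ j, eta Q k j * d' j = d' k * zeta Q k j := by
    intro j
    have hr := hsk j k
    have hr2 := hsk k j
    unfold eta zeta
    rcases lt_or_ge 0 (Q j k) with h | h
    · have h2 : 0 < -Q k j := by nlinarith [hd' j, hd' k]
      rw [if_pos h, if_pos h2]; nlinarith [hd' j, hd' k]
    · have h2 : ¬ 0 < -Q k j := by nlinarith [hd' j, hd' k]
      rw [if_neg (not_lt.2 h), if_neg h2]; ring
  ext i j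
  rw [EmulT]
  simp only [mulF]
  by_cases hi : i = k <;> by_cases hj : j = k
  · rw [hi, hj]
    simp [Matrix.diagonal_apply, hzk, hek, mul_ite, ite_mul, mul_zero, zero_mul,
      Finset.sum_ite_eq', Finset.sum_sub_distrib]
  · rw [hi]
    have e1 : ∑ l : I, eta Q k l *
        (Matrix.diagonal d' l j + Matrix.diagonal d' l k * zeta Q k j)
        = eta Q k j * d' j + eta Q k k * (d' k * zeta Q k j) := by
      simp only [Matrix.diagonal_apply, mul_add, Finset.sum_add_distrib, ite_mul,
        zero_mul, mul_ite, mul_zero]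
      rw [Finset.sum_ite_eq', Finset.sum_ite_eq']
      simp [mul_assoc]
    simp only [if_neg hj, if_pos rfl, e1, hek]
    rw [key j]
    simp [Matrix.diagonal_apply, Ne.symm hj, hj]
  · rw [hj]
    simp [Matrix.diagonal_apply, hi, hzk]
  · rw [if_neg hi, if_neg hj]
    simp [Matrix.diagonal_apply, hi, hj]

end

/-- If `B` is skew-symmetrizable with skew-symmetrizer `D` (positive integer diagonal),
`P` is skew-symmetric with `PB = cD`, then the mutated Poisson matrix `P'` is
skew-symmetric and satisfies `P' B' = cD`, where `B' = μ_k(B)`. -/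
theorem stmt0 {I : Type*} [Fintype I] [DecidableEq I]
    (B : Matrix I I ℤ) (d : I → ℤ) (hd : ∀ i, 0 < d i)
    (hDB : ∀ i j, d i * B i j = -(d j * B j i))
    (c : ℚ) (P : Matrix I I ℚ) (hP : Pᵀ = -P) (k : I)
    (hPB : P * B.map ((↑) : ℤ → ℚ) = c • Matrix.diagonal fun i => (d i : ℚ)) :
    (poissonMut (B.map ((↑) : ℤ → ℚ)) P k)ᵀ = -(poissonMut (B.map ((↑) : ℤ → ℚ)) P k) ∧
    poissonMut (B.map ((↑) : ℤ → ℚ)) P k * matMut (B.map ((↑) : ℤ → ℚ)) k =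
      c • Matrix.diagonal fun i => (d i : ℚ) := by
  set Q : Matrix I I ℚ := B.map ((↑) : ℤ → ℚ) with hQ
  have hQa : ∀ i j, Q i j = (B i j : ℚ) := fun i j => rfl
  have hsk : ∀ i j, (d i : ℚ) * Q i j = -((d j : ℚ) * Q j i) := by
    intro i j
    have h := hDB i j
    have h2 : ((d i * B i j : ℤ) : ℚ) = ((-(d j * B j i) : ℤ) : ℚ) := by exact_mod_cast h
    push_cast at h2
    simpa [hQa] using h2
  have hd' : ∀ i, (0 : ℚ) < (d i : ℚ) := fun i => by exact_mod_cast hd i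
  have hBkk : B k k = 0 := by
    have h := hDB k k
    have h2 : d k * B k k = 0 := by linarith
    rcases mul_eq_zero.mp h2 with h3 | h3
    · exact absurd h3 (ne_of_gt (hd k))
    · exact h3
  have hQkk : Q k k = 0 := by simp [hQa, hBkk]
  have h1 := hPmut Q k P hP hQkk
  have h2 := hBmut Q k hQkk
  have h3 := hEE Q k hQkk
  have h4 := hD Q k (fun i => (d i : ℚ)) hd' hsk hQkk
  constructor
  · rw [h1]
    rw [transpose_mul, transpose_mul, transpose_transpose, hP]
    simp [Matrix.mul_assoc, Matrix.neg_mul, Matrix.mul_neg]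
  · rw [h1, h2]
    have h5 : Ealt Q k * (Ealt Q k * (Q * Falt Q k)) = Q * Falt Q k := by
      rw [← Matrix.mul_assoc, h3, Matrix.one_mul]
    calc (Ealt Q k)ᵀ * (P * Ealt Q k) * (Ealt Q k * (Q * Falt Q k))
        = (Ealt Q k)ᵀ * (P * (Ealt Q k * (Ealt Q k * (Q * Falt Q k)))) := by
          simp only [Matrix.mul_assoc]
      _ = (Ealt Q k)ᵀ * (P * (Q * Falt Q k)) := by rw [h5]
      _ = (Ealt Q k)ᵀ * ((P * Q) * Falt Q k) := by rw [Matrix.mul_assoc]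
      _ = (Ealt Q k)ᵀ * ((c • Matrix.diagonal fun i => (d i : ℚ)) * Falt Q k) := by
          rw [hPB]
      _ = c • ((Ealt Q k)ᵀ * (Matrix.diagonal (fun i => (d i : ℚ)) * Falt Q k)) := by
          rw [Matrix.smul_mul, Matrix.mul_smul]
      _ = c • Matrix.diagonal fun i => (d i : ℚ) := by rw [h4]
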